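/- The following identity of rational functions holds: ∏_{1≤i<j≤4}(1 + sᵢsⱼ) / (1 − e₄)⁴ = (1 + e₂ + e₄)/(1 − e₄)² + (e₁e₄ + e₃)(e₁ + e₃)/(1 − e₄)⁴, where e₁, e₂, e₃, e₄ are the elementary symmetric polynomials in s₁, s₂, s₃, s₄. -/
import Mathlib


/-- The field `ℚ(s₁,s₂,s₃,s₄)`. -/
noncomputable abbrev RatField4 := FractionRing (MvPolynomial (Fin 4) ℚ)

set_option maxHeartbeats 2000000 in
/-- The rational-function identity (from the `ℓ₂ = 4`, `ℓ₁ = 1` affine example):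
`∏_{1≤i<j≤4}(1 + sᵢsⱼ)/(1 − e₄)⁴ = (1 + e₂ + e₄)/(1 − e₄)² + (e₁e₄ + e₃)(e₁ + e₃)/(1 − e₄)⁴`,
where `eₖ` is the `k`-th elementary symmetric polynomial in `s₁,…,s₄`. -/
theorem stmt11 :
    let φ : MvPolynomial (Fin 4) ℚ →+* RatField4 :=
      algebraMap (MvPolynomial (Fin 4) ℚ) RatField4
    let s₁ : RatField4 := φ (MvPolynomial.X 0)
    let s₂ : RatField4 := φ (MvPolynomial.X 1)
    let s₃ : RatField4 := φ (MvPolynomial.X 2)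
    let s₄ : RatField4 := φ (MvPolynomial.X 3)
    let e₁ : RatField4 := s₁ + s₂ + s₃ + s₄
    let e₂ : RatField4 := s₁ * s₂ + s₁ * s₃ + s₁ * s₄ + s₂ * s₃ + s₂ * s₄ + s₃ * s₄
    let e₃ : RatField4 := s₁ * s₂ * s₃ + s₁ * s₂ * s₄ + s₁ * s₃ * s₄ + s₂ * s₃ * s₄
    let e₄ : RatField4 := s₁ * s₂ * s₃ * s₄
    (1 + s₁ * s₂) * (1 + s₁ * s₃) * (1 + s₁ * s₄) * (1 + s₂ * s₃) * (1 + s₂ * s₄) *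
        (1 + s₃ * s₄) / (1 - e₄) ^ 4
      = (1 + e₂ + e₄) / (1 - e₄) ^ 2 + (e₁ * e₄ + e₃) * (e₁ + e₃) / (1 - e₄) ^ 4 := by
  intro φ s₁ s₂ s₃ s₄ e₁ e₂ e₃ e₄
  have hinj := IsFractionRing.injective (MvPolynomial (Fin 4) ℚ) RatField4
  have h4 : (1 : RatField4) - e₄ ≠ 0 := by
    have he : (1:RatField4) - e₄ = φ (1 - MvPolynomial.X 0 * MvPolynomial.X 1 *
        MvPolynomial.X 2 * MvPolynomial.X 3) := by
      simp [e₄, s₁, s₂, s₃, s₄]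
    rw [he]
    intro h
    have h0 : (1 - MvPolynomial.X 0 * MvPolynomial.X 1 * MvPolynomial.X 2 * MvPolynomial.X 3
        : MvPolynomial (Fin 4) ℚ) = 0 := hinj (by simpa using h)
    have := congrArg (MvPolynomial.eval (0 : Fin 4 → ℚ)) h0
    simp at this
  field_simp
  ring
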